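/- Let ℓ be a learning function with ℓ̲ = ℓ'(1) and ℓ̄ = ℓ'(0), and define Γ(z) = ‖z‖₁·λ(z/‖z‖₁) for z ∈ ℝ_+^K with z ≠ 0 and Γ(0) = 0, where λ(π) = 1/H(π). Then Γ is globally Lipschitz on [0,1]^K with respect to the ℓ¹-norm: for all z, z' ∈ [0,1]^K, |Γ(z) − Γ(z')| ≤ (ℓ̄ + 2ℓ̄³/ℓ̲)·‖z − z'‖₁. -/

import Mathlib

open Finset

noncomputable section

/-- The simplex Δ^{K-1}: nonnegative coordinates summing to 1. -/
def simplex (K : ℕ) : Set (Fin K → ℝ) :=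
  {π | (∀ k, 0 ≤ π k) ∧ ∑ k, π k = 1}

/-- ℓ¹-norm on ℝ^K. -/
def l1 {K : ℕ} (a : Fin K → ℝ) : ℝ := ∑ k, |a k|

/-- Coverage operator C(a,b) = ∑ min(a_k, b_k). -/
def Cov {K : ℕ} (a b : Fin K → ℝ) : ℝ := ∑ k, min (a k) (b k)

/-- A learning function ℓ : [0,∞) → [0,∞): continuous, strictly increasing,
strictly concave, ℓ(0)=0, ℓ(1)=1, continuously differentiable on [0,1]
with derivative `deriv`, ℓ'(1) > 0 (finiteness of ℓ'(0) is automatic). -/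
structure LearningFunction where
  toFun : ℝ → ℝ
  deriv : ℝ → ℝ
  continuousOn : ContinuousOn toFun (Set.Ici 0)
  strictMonoOn : StrictMonoOn toFun (Set.Ici 0)
  strictConcaveOn : StrictConcaveOn ℝ (Set.Ici 0) toFun
  nonneg : ∀ s, 0 ≤ s → 0 ≤ toFun s
  map_zero : toFun 0 = 0
  map_one : toFun 1 = 1
  hasDerivAt : ∀ s ∈ Set.Icc (0:ℝ) 1,
    HasDerivWithinAt toFun (deriv s) (Set.Icc (0:ℝ) 1) s
  derivContinuousOn : ContinuousOn deriv (Set.Icc (0:ℝ) 1)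
  deriv_one_pos : 0 < deriv 1

/-- Maximal feasible scale H(π) = sup { H ≥ 0 : ∑ ℓ(H π_k) ≤ 1 }. -/
def Hscale {K : ℕ} (L : LearningFunction) (π : Fin K → ℝ) : ℝ :=
  sSup {H : ℝ | 0 ≤ H ∧ ∑ k, L.toFun (H * π k) ≤ 1}

/-- Relative inefficiency index λ(π) = 1/H(π). -/
def lam {K : ℕ} (L : LearningFunction) (π : Fin K → ℝ) : ℝ :=
  1 / Hscale L π

/-- Γ(z) = ‖z‖₁ λ(z/‖z‖₁) for z ≠ 0, Γ(0) = 0. -/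
def Gam {K : ℕ} (L : LearningFunction) (z : Fin K → ℝ) : ℝ :=
  if z = 0 then 0 else l1 z * lam L (fun k => z k / l1 z)

/-- Fragmentation index D(π) = 1 - ∑ π_k². -/
def Dfrag {K : ℕ} (π : Fin K → ℝ) : ℝ := 1 - ∑ k, (π k) ^ 2

/-- Lipschitz constant L_Γ = ℓ̄ + 2 ℓ̄³/ℓ̲. -/
def LGam (L : LearningFunction) : ℝ := L.deriv 0 + 2 * L.deriv 0 ^ 3 / L.deriv 1

open Topology Filter

namespace LFaux

variable (L : LearningFunction)

lemma concaveIcc : ConcaveOn ℝ (Set.Icc (0:ℝ) 1) L.toFun :=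
  L.strictConcaveOn.concaveOn.subset Set.Icc_subset_Ici_self (convex_Icc 0 1)

lemma upper {a b : ℝ} (ha : a ∈ Set.Icc (0:ℝ) 1) (hb : b ∈ Set.Icc (0:ℝ) 1) (hab : a ≤ b) :
    L.toFun b - L.toFun a ≤ L.deriv a * (b - a) := by
  rcases eq_or_lt_of_le hab with rfl | h
  · simp
  · have hs := (concaveIcc L).slope_le_of_hasDerivWithinAt ha hb h (L.hasDerivAt a ha)
    rw [slope_def_field, div_le_iff₀ (by linarith)] at hs
    linarith

lemma lower {a b : ℝ} (ha : a ∈ Set.Icc (0:ℝ) 1) (hb : b ∈ Set.Icc (0:ℝ) 1) (hab : a ≤ b) :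
    L.deriv b * (b - a) ≤ L.toFun b - L.toFun a := by
  rcases eq_or_lt_of_le hab with rfl | h
  · simp
  · have hs := (concaveIcc L).le_slope_of_hasDerivWithinAt ha hb h (L.hasDerivAt b hb)
    rw [slope_def_field, le_div_iff₀ (by linarith)] at hs
    linarith

lemma deriv_anti {a b : ℝ} (ha : a ∈ Set.Icc (0:ℝ) 1) (hb : b ∈ Set.Icc (0:ℝ) 1)
    (hab : a ≤ b) : L.deriv b ≤ L.deriv a := by
  rcases eq_or_lt_of_le hab with rfl | h
  · exact le_refl _
  · have h1 := (concaveIcc L).le_slope_of_hasDerivWithinAt ha hb h (L.hasDerivAt b hb)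
    have h2 := (concaveIcc L).slope_le_of_hasDerivWithinAt ha hb h (L.hasDerivAt a ha)
    linarith

lemma upper' {a b : ℝ} (ha : a ∈ Set.Icc (0:ℝ) 1) (hb : b ∈ Set.Icc (0:ℝ) 1) (hab : a ≤ b) :
    L.toFun b - L.toFun a ≤ L.deriv 0 * (b - a) :=
  le_trans (upper L ha hb hab)
    (mul_le_mul_of_nonneg_right
      (deriv_anti L (Set.mem_Icc.2 ⟨le_refl 0, zero_le_one⟩) ha ha.1) (by linarith))

lemma lower' {a b : ℝ} (ha : a ∈ Set.Icc (0:ℝ) 1) (hb : b ∈ Set.Icc (0:ℝ) 1) (hab : a ≤ b) :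
    L.deriv 1 * (b - a) ≤ L.toFun b - L.toFun a :=
  le_trans
    (mul_le_mul_of_nonneg_right
      (deriv_anti L hb (Set.mem_Icc.2 ⟨zero_le_one, le_refl 1⟩) hb.2) (by linarith))
    (lower L ha hb hab)

lemma one_le_deriv0 : 1 ≤ L.deriv 0 := by
  have h := upper' L (Set.mem_Icc.2 ⟨le_refl 0, zero_le_one⟩)
    (Set.mem_Icc.2 ⟨zero_le_one, le_refl 1⟩) zero_le_one
  rw [L.map_zero, L.map_one] at h
  linarith

lemma deriv1_le_one : L.deriv 1 ≤ 1 := by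
  have h := lower' L (Set.mem_Icc.2 ⟨le_refl 0, zero_le_one⟩)
    (Set.mem_Icc.2 ⟨zero_le_one, le_refl 1⟩) zero_le_one
  rw [L.map_zero, L.map_one] at h
  linarith

lemma deriv0_pos : 0 < L.deriv 0 := lt_of_lt_of_le one_pos (one_le_deriv0 L)

lemma self_le {x : ℝ} (hx : x ∈ Set.Icc (0:ℝ) 1) : x ≤ L.toFun x := by
  have h := L.strictConcaveOn.concaveOn.2 (Set.mem_Ici.2 zero_le_one)
    (Set.mem_Ici.2 (le_refl 0)) hx.1 (by linarith [hx.2] : (0:ℝ) ≤ 1 - x) (by ring)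
  simp only [smul_eq_mul, mul_one, mul_zero, add_zero, L.map_one, L.map_zero] at h
  linarith

lemma le_bar {x : ℝ} (hx : x ∈ Set.Icc (0:ℝ) 1) : L.toFun x ≤ L.deriv 0 * x := by
  have h := upper' L (Set.mem_Icc.2 ⟨le_refl 0, zero_le_one⟩) hx hx.1
  rw [L.map_zero] at h
  linarith

lemma lip {a b : ℝ} (ha : a ∈ Set.Icc (0:ℝ) 1) (hb : b ∈ Set.Icc (0:ℝ) 1) :
    L.toFun b ≤ L.toFun a + L.deriv 0 * |b - a| := by
  rcases le_total b a with h | h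
  · have h1 : L.toFun b ≤ L.toFun a := L.strictMonoOn.monotoneOn hb.1 ha.1 h
    have h2 : 0 ≤ L.deriv 0 * |b - a| :=
      mul_nonneg (le_of_lt (deriv0_pos L)) (abs_nonneg _)
    linarith
  · have h1 := upper' L ha hb h
    rw [abs_of_nonneg (by linarith : (0:ℝ) ≤ b - a)]
    linarith

end LFaux

open LFaux

lemma Gam_spec {K : ℕ} (L : LearningFunction) (z : Fin K → ℝ)
    (hz : ∀ k, 0 ≤ z k) (hz0 : z ≠ 0) :
    0 < Gam L z ∧ l1 z ≤ Gam L z ∧ Gam L z ≤ L.deriv 0 * l1 z ∧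
    (∀ k, z k ≤ Gam L z) ∧ (∑ k, L.toFun (z k / Gam L z)) = 1 ∧
    (∀ t, 0 < t → (∑ k, L.toFun (z k / t)) ≤ 1 → Gam L z ≤ t) := by
  -- basic facts about s = l1 z
  have hl1 : l1 z = ∑ k, z k := by
    unfold l1; exact Finset.sum_congr rfl fun k _ => abs_of_nonneg (hz k)
  obtain ⟨k0, hk0⟩ : ∃ k, z k ≠ 0 := Function.ne_iff.1 hz0
  have hk0' : 0 < z k0 := lt_of_le_of_ne (hz k0) (Ne.symm hk0)
  have hs : 0 < l1 z := by
    rw [hl1]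
    exact Finset.sum_pos' (fun k _ => hz k) ⟨k0, Finset.mem_univ k0, hk0'⟩
  set s := l1 z with hsdef
  set π : Fin K → ℝ := fun k => z k / s with hπdef
  have hπ0 : ∀ k, 0 ≤ π k := fun k => div_nonneg (hz k) hs.le
  have hπsum : ∑ k, π k = 1 := by
    simp only [hπdef, ← Finset.sum_div, ← hl1, div_self hs.ne']
  have hπle1 : ∀ k, π k ≤ 1 := by
    intro k
    rw [← hπsum]
    exact Finset.single_le_sum (fun j _ => hπ0 j) (Finset.mem_univ k)
  have hπk0 : 0 < π k0 := div_pos hk0' hs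
  set A : Set ℝ := {H : ℝ | 0 ≤ H ∧ ∑ k, L.toFun (H * π k) ≤ 1} with hAdef
  set φ : ℝ → ℝ := fun H => ∑ k, L.toFun (H * π k) with hφdef
  -- 0 ∈ A
  have h0A : (0:ℝ) ∈ A := by
    constructor
    · exact le_refl 0
    · simp [L.map_zero]
  -- bounded above
  have hbdd : BddAbove A := by
    refine ⟨1 / π k0, fun H hH => ?_⟩
    obtain ⟨hH0, hHsum⟩ := hH
    have hterm : L.toFun (H * π k0) ≤ 1 := by
      have hnn : ∀ k ∈ Finset.univ, 0 ≤ L.toFun (H * π k) :=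
        fun k _ => L.nonneg _ (mul_nonneg hH0 (hπ0 k))
      calc L.toFun (H * π k0) ≤ ∑ k, L.toFun (H * π k) :=
            Finset.single_le_sum hnn (Finset.mem_univ k0)
        _ ≤ 1 := hHsum
    have harg : H * π k0 ≤ 1 := by
      by_contra hc
      push_neg at hc
      have := L.strictMonoOn (Set.mem_Ici.2 zero_le_one)
        (Set.mem_Ici.2 (by linarith : (0:ℝ) ≤ H * π k0)) hc
      rw [L.map_one] at this
      linarith
    rw [le_div_iff₀ hπk0]
    exact harg
  -- closed
  have hφcont : ContinuousOn φ (Set.Ici 0) := by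
    apply continuousOn_finset_sum
    intro k _
    exact L.continuousOn.comp ((continuous_id.mul continuous_const).continuousOn)
      (fun H hH => Set.mem_Ici.2 (mul_nonneg (Set.mem_Ici.1 hH) (hπ0 k)))
  have hclosed : IsClosed A := by
    have := hφcont.preimage_isClosed_of_isClosed isClosed_Ici (isClosed_Iic (a := (1:ℝ)))
    convert this using 1
    rfl
  set Hst := sSup A with hHstdef
  have hHstA : Hst ∈ A := hclosed.csSup_mem ⟨0, h0A⟩ hbdd
  -- 1/ℓ̄ ∈ A
  have hbarpos := deriv0_pos L
  have hfeas : (1 / L.deriv 0) ∈ A := by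
    have hd1 : 1 / L.deriv 0 ≤ 1 := by
      rw [div_le_one hbarpos]; exact one_le_deriv0 L
    have hb : ∀ k, (1 / L.deriv 0) * π k ∈ Set.Icc (0:ℝ) 1 := by
      intro k
      refine ⟨mul_nonneg (by positivity) (hπ0 k), ?_⟩
      have h2 : (1 / L.deriv 0) * π k ≤ 1 * 1 :=
        mul_le_mul hd1 (hπle1 k) (hπ0 k) zero_le_one
      linarith
    refine ⟨by positivity, ?_⟩
    have hstep : ∑ k, L.toFun ((1 / L.deriv 0) * π k)
        ≤ ∑ k, L.deriv 0 * ((1 / L.deriv 0) * π k) :=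
      Finset.sum_le_sum fun k _ => le_bar L (hb k)
    have hstep2 : ∑ k, L.deriv 0 * ((1 / L.deriv 0) * π k) = ∑ k, π k := by
      apply Finset.sum_congr rfl
      intro k _
      field_simp
    rw [hstep2, hπsum] at hstep
    exact hstep
  have hHstpos : 0 < Hst := lt_of_lt_of_le (by positivity) (le_csSup hbdd hfeas)
  -- each argument ≤ 1
  have hargle : ∀ k, Hst * π k ≤ 1 := by
    intro k
    have hterm : L.toFun (Hst * π k) ≤ 1 := by
      have hnn : ∀ j ∈ Finset.univ, 0 ≤ L.toFun (Hst * π j) :=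
        fun j _ => L.nonneg _ (mul_nonneg hHstA.1 (hπ0 j))
      exact le_trans (Finset.single_le_sum hnn (Finset.mem_univ k)) hHstA.2
    by_contra hc
    push_neg at hc
    have := L.strictMonoOn (Set.mem_Ici.2 zero_le_one)
      (Set.mem_Ici.2 (by linarith : (0:ℝ) ≤ Hst * π k)) hc
    rw [L.map_one] at this
    linarith
  -- equality at the sup
  have heq : φ Hst = 1 := by
    rcases lt_or_eq_of_le hHstA.2 with hlt | hE
    · exfalso
      have hca : ContinuousAt φ Hst :=
        hφcont.continuousAt (Ici_mem_nhds hHstpos)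
      have hev : ∀ᶠ H in 𝓝 Hst, φ H < 1 := hca.eventually_lt_const hlt
      have hev' : ∀ᶠ H in 𝓝[>] Hst, φ H < 1 := hev.filter_mono nhdsWithin_le_nhds
      obtain ⟨H, hHlt, hHgt⟩ := (hev'.and self_mem_nhdsWithin).exists
      have : H ∈ A := ⟨by linarith [hHstpos, hHgt], hHlt.le⟩
      exact absurd (le_csSup hbdd this) (not_le.2 (Set.mem_Ioi.1 hHgt))
    · exact hE
  -- Gam value
  have hGam : Gam L z = s / Hst := by
    rw [Gam, if_neg hz0]
    unfold lam Hscale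
    rw [← hsdef]
    rw [show {H : ℝ | 0 ≤ H ∧ ∑ k, L.toFun (H * (z k / s)) ≤ 1} = A from rfl]
    rw [← hHstdef]
    ring
  have hGampos : 0 < Gam L z := by rw [hGam]; positivity
  have hdivarg : ∀ k, z k / Gam L z = Hst * π k := by
    intro k
    rw [hGam, hπdef]
    field_simp
  refine ⟨hGampos, ?_, ?_, ?_, ?_, ?_⟩
  · -- l1 z ≤ Gam
    have h1 : (1:ℝ) = φ Hst := heq.symm
    have h2 : ∑ k, Hst * π k ≤ φ Hst := by
      apply Finset.sum_le_sum
      intro k _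
      exact self_le L ⟨mul_nonneg hHstpos.le (hπ0 k), hargle k⟩
    have h3 : ∑ k, Hst * π k = Hst := by
      rw [← Finset.mul_sum, hπsum, mul_one]
    have hHle1 : Hst ≤ 1 := by rw [← h3]; rw [h3] at h2; linarith [heq ▸ h2]
    rw [hGam]
    calc s = s / 1 := (div_one s).symm
      _ ≤ s / Hst := by
          apply div_le_div_of_nonneg_left hs.le hHstpos hHle1
  · -- Gam ≤ ℓ̄ * l1 z
    rw [hGam]
    have h1 : 1 / L.deriv 0 ≤ Hst := le_csSup hbdd hfeas
    rw [div_le_iff₀ hHstpos]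
    calc s = L.deriv 0 * s * (1 / L.deriv 0) := by field_simp
      _ ≤ L.deriv 0 * s * Hst := by
          apply mul_le_mul_of_nonneg_left h1
          positivity
  · -- z k ≤ Gam
    intro k
    have := hargle k
    rw [← hdivarg k] at this
    rw [div_le_one hGampos] at this
    exact this
  · -- equality
    calc ∑ k, L.toFun (z k / Gam L z) = ∑ k, L.toFun (Hst * π k) := by
          apply Finset.sum_congr rfl; intro k _; rw [hdivarg k]
      _ = 1 := heq
  · -- minimality
    intro t ht hfeast
    have hH : s / t ∈ A := by
      constructor
      · positivity
      · have : ∀ k, s / t * π k = z k / t := by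
          intro k; rw [hπdef]; field_simp
        calc ∑ k, L.toFun (s / t * π k) = ∑ k, L.toFun (z k / t) := by
              apply Finset.sum_congr rfl; intro k _; rw [this k]
          _ ≤ 1 := hfeast
    have h1 : s / t ≤ Hst := le_csSup hbdd hH
    rw [hGam, div_le_iff₀ hHstpos]
    calc s = (s / t) * t := by field_simp
      _ ≤ Hst * t := mul_le_mul_of_nonneg_right h1 ht.le
      _ = t * Hst := mul_comm _ _



lemma Gam_nonneg {K : ℕ} (L : LearningFunction) (z : Fin K → ℝ) (hz : ∀ k, 0 ≤ z k) :
    0 ≤ Gam L z := by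
  by_cases h0 : z = 0
  · rw [Gam, if_pos h0]
  · exact (Gam_spec L z hz h0).1.le

lemma Gam_one_sided {K : ℕ} (L : LearningFunction) (z z' : Fin K → ℝ)
    (hz : ∀ k, 0 ≤ z k) (hz' : ∀ k, 0 ≤ z' k) :
    Gam L z ≤ Gam L z' + (L.deriv 0 ^ 2 / L.deriv 1) * l1 (z - z') := by
  have hbar := deriv0_pos L
  have hbar1 := one_le_deriv0 L
  have hlow := L.deriv_one_pos
  have hlow1 := deriv1_le_one L
  have hC1 : 1 ≤ L.deriv 0 ^ 2 / L.deriv 1 := by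
    rw [le_div_iff₀ hlow]
    nlinarith
  have hCbar : L.deriv 0 ≤ L.deriv 0 ^ 2 / L.deriv 1 := by
    rw [le_div_iff₀ hlow]
    nlinarith
  have hδ0 : 0 ≤ l1 (z - z') := Finset.sum_nonneg fun k _ => abs_nonneg _
  by_cases h0 : z = 0
  · rw [Gam, if_pos h0]
    have := Gam_nonneg L z' hz'
    have : 0 ≤ (L.deriv 0 ^ 2 / L.deriv 1) * l1 (z - z') :=
      mul_nonneg (by positivity) hδ0
    linarith [Gam_nonneg L z' hz']
  by_cases h0' : z' = 0
  · subst h0'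
    have hG0 : Gam L (0 : Fin K → ℝ) = 0 := by simp [Gam]
    rw [hG0]
    obtain ⟨_, _, hub, _, _, _⟩ := Gam_spec L z hz h0
    have hsub : l1 (z - 0) = l1 z := by simp [l1]
    rw [hsub, zero_add]
    calc Gam L z ≤ L.deriv 0 * l1 z := hub
      _ ≤ (L.deriv 0 ^ 2 / L.deriv 1) * l1 z := by
          apply mul_le_mul_of_nonneg_right hCbar
          exact Finset.sum_nonneg fun k _ => abs_nonneg _
  -- both nonzero
  obtain ⟨hpos', hge', hub', hk', heq', hmin'⟩ := Gam_spec L z' hz' h0'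
  obtain ⟨hpos, hge, hub, hk, heq, hmin⟩ := Gam_spec L z hz h0
  set δ := l1 (z - z') with hδdef
  set C := L.deriv 0 ^ 2 / L.deriv 1 with hCdef
  rcases eq_or_lt_of_le hδ0 with hδeq | hδpos
  · -- δ = 0 ⇒ z = z'
    have hzz : z = z' := by
      funext k
      have hk0 : |z k - z' k| = 0 := by
        have h1 : ∀ j ∈ Finset.univ, (0:ℝ) ≤ |(z - z') j| := fun j _ => abs_nonneg _
        have := (Finset.sum_eq_zero_iff_of_nonneg h1).1 hδeq.symm k (Finset.mem_univ k)
        simpa using this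
      have := abs_eq_zero.1 hk0
      linarith
    rw [hzz, ← hδeq]
    simp
  · set t' := Gam L z' with ht'def
    set t := t' + C * δ with htdef
    have htpos : 0 < t := by positivity
    have htt' : t' ≤ t := by nlinarith
    have hterm : ∀ k, |z k - z' k| ≤ δ := by
      intro k
      have : |(z - z') k| ≤ δ :=
        Finset.single_le_sum (fun j (_ : j ∈ Finset.univ) => abs_nonneg ((z - z') j))
          (Finset.mem_univ k)
      simpa using this
    -- memberships
    have hu : ∀ k, z k / t ∈ Set.Icc (0:ℝ) 1 := by
      intro k
      refine ⟨div_nonneg (hz k) htpos.le, ?_⟩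
      rw [div_le_one htpos]
      have h1 : z k ≤ z' k + |z k - z' k| := by
        cases abs_cases (z k - z' k) with
        | inl h => linarith [h.1]
        | inr h => linarith [h.1]
      have h2 : z' k ≤ t' := hk' k
      have h3 : |z k - z' k| ≤ δ := hterm k
      have h4 : δ ≤ C * δ := by nlinarith
      linarith
    have hu' : ∀ k, z' k / t ∈ Set.Icc (0:ℝ) 1 := by
      intro k
      refine ⟨div_nonneg (hz' k) htpos.le, ?_⟩
      rw [div_le_one htpos]
      linarith [hk' k]
    have hv' : ∀ k, z' k / t' ∈ Set.Icc (0:ℝ) 1 := by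
      intro k
      refine ⟨div_nonneg (hz' k) hpos'.le, ?_⟩
      rw [div_le_one hpos']
      exact hk' k
    have hul : ∀ k, z' k / t ≤ z' k / t' := by
      intro k
      gcongr
      exact hz' k
    -- main estimate
    have hstep1 : ∀ k, L.toFun (z k / t) ≤
        L.toFun (z' k / t) + L.deriv 0 * (|z k - z' k| / t) := by
      intro k
      have := lip L (hu' k) (hu k)
      have habs : |z k / t - z' k / t| = |z k - z' k| / t := by
        rw [div_sub_div_same, abs_div, abs_of_pos htpos]
      rw [habs] at this
      exact this
    have hstep2 : ∀ k, L.toFun (z' k / t) ≤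
        L.toFun (z' k / t') - L.deriv 1 * (z' k / t' - z' k / t) := by
      intro k
      have hle : z' k / t ≤ z' k / t' := hul k
      have := lower' L (hu' k) (hv' k) hle
      linarith
    have hsum : ∑ k, L.toFun (z k / t) ≤
        (∑ k, L.toFun (z' k / t')) - L.deriv 1 * (l1 z' / t' - l1 z' / t)
          + L.deriv 0 * (δ / t) := by
      have h1 : ∑ k, L.toFun (z k / t) ≤
          ∑ k, (L.toFun (z' k / t') - L.deriv 1 * (z' k / t' - z' k / t)
            + L.deriv 0 * (|z k - z' k| / t)) := by
        apply Finset.sum_le_sum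
        intro k _
        have := hstep1 k
        have := hstep2 k
        linarith
      have hl1' : l1 z' = ∑ k, z' k :=
        Finset.sum_congr rfl fun k _ => abs_of_nonneg (hz' k)
      have hδsum : δ = ∑ k, |z k - z' k| := by
        rw [hδdef]; unfold l1; apply Finset.sum_congr rfl; intro k _; simp
      have hB : ∑ k, z' k / t' = l1 z' / t' := by
        rw [hl1', Finset.sum_div]
      have hC2 : ∑ k, z' k / t = l1 z' / t := by
        rw [hl1', Finset.sum_div]
      have hD : ∑ k, |z k - z' k| / t = δ / t := by
        rw [hδsum, Finset.sum_div]
      have h2 : ∑ k, (L.toFun (z' k / t') - L.deriv 1 * (z' k / t' - z' k / t)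
            + L.deriv 0 * (|z k - z' k| / t))
          = (∑ k, L.toFun (z' k / t')) - L.deriv 1 * (l1 z' / t' - l1 z' / t)
            + L.deriv 0 * (δ / t) := by
        rw [Finset.sum_add_distrib, Finset.sum_sub_distrib, ← Finset.mul_sum,
          ← Finset.mul_sum, Finset.sum_sub_distrib, hB, hC2, hD]
      rw [h2] at h1
      exact h1
    rw [heq'] at hsum
    -- the key numeric inequality
    have hs'pos : 0 < l1 z' := by
      have h0lt : (0:ℝ) < t' := hpos'
      by_contra hc
      push_neg at hc
      have : l1 z' = 0 := le_antisymm hc (Finset.sum_nonneg fun k _ => abs_nonneg _)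
      rw [this] at hge'
      -- t' ≤ ℓ̄ * 0 = 0 contradiction with hub'
      rw [this, mul_zero] at hub'
      linarith
    have hkey : L.deriv 0 * (δ / t) ≤ L.deriv 1 * (l1 z' / t' - l1 z' / t) := by
      have hts : l1 z' / t' - l1 z' / t = l1 z' * (C * δ) / (t' * t) := by
        field_simp
        ring
      rw [hts, ← mul_div_assoc, ← mul_div_assoc,
        div_le_div_iff₀ htpos (by positivity : (0:ℝ) < t' * t)]
      have hCl : L.deriv 1 * C = L.deriv 0 ^ 2 := by
        rw [hCdef]; field_simp
      -- goal: ℓ̄ * δ * (t' * t) ≤ ℓ̲ * (l1 z' * (C * δ)) * t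
      have ht'le : t' ≤ L.deriv 0 * l1 z' := hub'
      calc L.deriv 0 * δ * (t' * t) = (L.deriv 0 * t') * (δ * t) := by ring
        _ ≤ (L.deriv 0 * (L.deriv 0 * l1 z')) * (δ * t) := by
            apply mul_le_mul_of_nonneg_right _ (by positivity)
            exact mul_le_mul_of_nonneg_left ht'le hbar.le
        _ = (L.deriv 1 * C) * l1 z' * (δ * t) := by rw [hCl]; ring
        _ = L.deriv 1 * (l1 z' * (C * δ)) * t := by ring
    have hfeast : ∑ k, L.toFun (z k / t) ≤ 1 := by linarith
    exact hmin t htpos hfeast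




/-- Γ is globally Lipschitz on [0,1]^K with constant ℓ̄ + 2ℓ̄³/ℓ̲ in the ℓ¹-norm. -/
theorem Gam_lipschitz {K : ℕ} (L : LearningFunction)
    (z z' : Fin K → ℝ)
    (hz : ∀ k, z k ∈ Set.Icc (0:ℝ) 1) (hz' : ∀ k, z' k ∈ Set.Icc (0:ℝ) 1) :
    |Gam L z - Gam L z'| ≤
      (L.deriv 0 + 2 * L.deriv 0 ^ 3 / L.deriv 1) * l1 (z - z') := by
  have hbar := deriv0_pos L
  have hbar1 := one_le_deriv0 L
  have hlow := L.deriv_one_pos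
  have hδ0 : 0 ≤ l1 (z - z') := Finset.sum_nonneg fun k _ => abs_nonneg _
  have hCD : L.deriv 0 ^ 2 / L.deriv 1 ≤ L.deriv 0 + 2 * L.deriv 0 ^ 3 / L.deriv 1 := by
    have h2 : L.deriv 0 ^ 2 ≤ 2 * L.deriv 0 ^ 3 := by nlinarith
    have h3 : L.deriv 0 ^ 2 / L.deriv 1 ≤ 2 * L.deriv 0 ^ 3 / L.deriv 1 := by gcongr
    linarith
  have hsymm : l1 (z' - z) = l1 (z - z') := by
    unfold l1
    apply Finset.sum_congr rfl
    intro k _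
    simp [abs_sub_comm]
  have h1 := Gam_one_sided L z z' (fun k => (hz k).1) (fun k => (hz' k).1)
  have h2 := Gam_one_sided L z' z (fun k => (hz' k).1) (fun k => (hz k).1)
  rw [hsymm] at h2
  rw [abs_sub_le_iff]
  constructor
  · have := mul_le_mul_of_nonneg_right hCD hδ0
    linarith
  · have := mul_le_mul_of_nonneg_right hCD hδ0
    linarith


end
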